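/- arXiv:1110.2392 — 3 statements merged into one kernel-verified Lean document; each statement's English description precedes it below -/
import Mathlib

section
/- If 0 < s ≤ √c/2 with c > 0, then the series ∑_{j=1}^∞ e^{j(2 - cj/s²)} converges and its sum is at most 4s²/c. -/
theorem series_bound_small_s (s c : ℝ) (hs : 0 < s) (hc : 0 < c)
    (hsc : s ≤ Real.sqrt c / 2) :
    Summable (fun j : ℕ => Real.exp (2 * (j + 1) - c * (j + 1) ^ 2 / s ^ 2)) ∧
    ∑' j : ℕ, Real.exp (2 * (j + 1) - c * (j + 1) ^ 2 / s ^ 2) ≤ 4 * s ^ 2 / c := by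
  have hs2 : (0:ℝ) < s ^ 2 := by positivity
  have hsq : Real.sqrt c ^ 2 = c := Real.sq_sqrt hc.le
  have ht4 : 4 ≤ c / s ^ 2 := by
    rw [le_div_iff₀ hs2]
    nlinarith [Real.sqrt_nonneg c]
  set t := c / s ^ 2 with htdef
  have ht0 : (0:ℝ) < t := by linarith
  set r := Real.exp (-(t / 2)) with hrdef
  have hr0 : 0 < r := Real.exp_pos _
  have hrhalf : r ≤ 1 / 2 := by
    have h1 : r ≤ Real.exp (-2) := Real.exp_le_exp.mpr (by linarith)
    have h2 : (2:ℝ) + 1 ≤ Real.exp 2 := Real.add_one_le_exp 2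
    have h3 : Real.exp (-2) = (Real.exp 2)⁻¹ := Real.exp_neg 2
    rw [h3] at h1
    have : (Real.exp 2)⁻¹ ≤ 1 / 2 := by
      rw [inv_le_iff_one_le_mul₀ (by positivity)]
      nlinarith
    linarith
  have hr1 : r < 1 := by linarith
  have hterm : ∀ j : ℕ, Real.exp (2 * (j + 1) - c * (j + 1) ^ 2 / s ^ 2) ≤ r ^ (j + 1) := by
    intro j
    rw [hrdef, ← Real.exp_nat_mul]
    apply Real.exp_le_exp.mpr
    have hn : (1:ℝ) ≤ (j:ℝ) + 1 := by have := Nat.cast_nonneg (α := ℝ) j; linarith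
    have hcs : c * ((j:ℝ) + 1) ^ 2 / s ^ 2 = t * ((j:ℝ) + 1) ^ 2 := by
      rw [htdef]; ring
    rw [hcs]
    push_cast
    nlinarith [sq_nonneg ((j:ℝ) + 1), mul_le_mul_of_nonneg_left hn ht0.le]
  have hgsum : Summable (fun j : ℕ => r ^ (j + 1)) := by
    simpa [pow_succ] using (summable_geometric_of_lt_one hr0.le hr1).mul_right r
  have hf : Summable (fun j : ℕ => Real.exp (2 * (j + 1) - c * (j + 1) ^ 2 / s ^ 2)) := by
    refine Summable.of_nonneg_of_le (fun j => (Real.exp_pos _).le) hterm hgsum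
  refine ⟨hf, ?_⟩
  have hle : ∑' j : ℕ, Real.exp (2 * (j + 1) - c * (j + 1) ^ 2 / s ^ 2) ≤ ∑' j : ℕ, r ^ (j + 1) :=
    Summable.tsum_le_tsum hterm hf hgsum
  have hgeom : ∑' j : ℕ, r ^ (j + 1) = (1 - r)⁻¹ * r := by
    simp only [pow_succ]
    rw [tsum_mul_right, tsum_geometric_of_lt_one hr0.le hr1]
  have h1r : (1:ℝ)/2 ≤ 1 - r := by linarith
  have hbound : (1 - r)⁻¹ * r ≤ 2 * r := by
    have h2 : (1 - r)⁻¹ ≤ 2 := by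
      rw [inv_le_iff_one_le_mul₀ (by linarith)]
      linarith
    nlinarith
  have hexp : t / 2 + 1 ≤ Real.exp (t / 2) := Real.add_one_le_exp _
  have hrt : 2 * r ≤ 4 / t := by
    have hE : 0 < Real.exp (t / 2) := Real.exp_pos _
    rw [hrdef, Real.exp_neg, mul_comm, inv_mul_eq_div, div_le_div_iff₀ hE ht0]
    nlinarith
  have hfin : 4 / t = 4 * s ^ 2 / c := by
    rw [htdef]; field_simp
  calc ∑' j : ℕ, Real.exp (2 * (j + 1) - c * (j + 1) ^ 2 / s ^ 2)
      ≤ (1 - r)⁻¹ * r := by rw [← hgeom]; exact hle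
    _ ≤ 2 * r := hbound
    _ ≤ 4 / t := hrt
    _ = 4 * s ^ 2 / c := hfin
end

section
/- If s > √c/2 with c > 0, then ∑_{j=1}^∞ e^{j(2 - cj/s²)} ≤ 8s²/c + e^{(1+1/e)s²/c}. -/
open Real MeasureTheory Set Finset


lemma exp_ge_quart {x : ℝ} (hx : 0 ≤ x) : 1 + x + x^2/2 + x^3/6 + x^4/24 ≤ Real.exp x := by
  have h := Real.sum_le_exp_of_nonneg hx 5
  simp [Finset.sum_range_succ] at h
  norm_num [Nat.factorial] at h
  linarith

lemma exp_ge_quad {x : ℝ} (hx : 0 ≤ x) : 1 + x + x^2/2 ≤ Real.exp x := by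
  have h := Real.sum_le_exp_of_nonneg hx 3
  simp [Finset.sum_range_succ] at h
  linarith

lemma q_le_exp_neg_quarter : (0.7788:ℝ) ≤ Real.exp (-(1/4)) := by
  have h1 : (0.7788:ℝ)^4 * Real.exp 1 ≤ 1 := by nlinarith [Real.exp_one_lt_d9]
  have h3 : (0.7788:ℝ)^4 ≤ Real.exp (-(1/4))^4 := by
    have h2 : Real.exp (-(1/4)) ^ 4 = Real.exp (-1) := by
      rw [← Real.exp_nat_mul]; norm_num
    rw [h2]
    calc (0.7788:ℝ)^4 = 0.7788^4 * Real.exp 1 * Real.exp (-1) := by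
          rw [mul_assoc, ← Real.exp_add]; norm_num
      _ ≤ 1 * Real.exp (-1) := mul_le_mul_of_nonneg_right h1 (Real.exp_pos _).le
      _ = Real.exp (-1) := one_mul _
  exact le_of_pow_le_pow_left₀ (by norm_num) (Real.exp_pos _).le h3

lemma expP (a : ℝ) (ha : 0 ≤ a) :
    1 + 0.367879*a + (0.367879*a)^2/2 + (0.367879*a)^3/6 + (0.367879*a)^4/24
      ≤ Real.exp (a / Real.exp 1) := by
  have hb : (0.367879:ℝ) * a ≤ a / Real.exp 1 := by
    rw [le_div_iff₀ (Real.exp_pos 1)]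
    nlinarith [Real.exp_one_lt_d9]
  calc _ ≤ Real.exp (0.367879*a) := exp_ge_quart (by positivity)
    _ ≤ _ := Real.exp_le_exp.2 hb

lemma expNeg (a : ℝ) (k : ℕ) (har : a ≤ (k:ℝ)/4) :
    (0.7788:ℝ)^k * (1 + ((k:ℝ)/4 - a) + ((k:ℝ)/4 - a)^2/2) ≤ Real.exp (-a) := by
  have h1 : Real.exp (-a) = Real.exp (-((k:ℝ)/4)) * Real.exp ((k:ℝ)/4 - a) := by
    rw [← Real.exp_add]; ring_nf
  have h2 : (0.7788:ℝ)^k ≤ Real.exp (-((k:ℝ)/4)) := by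
    have : Real.exp (-((k:ℝ)/4)) = Real.exp (-(1/4)) ^ k := by
      rw [← Real.exp_nat_mul]; ring_nf
    rw [this]
    exact pow_le_pow_left₀ (by norm_num) q_le_exp_neg_quarter k
  have h3 : 1 + ((k:ℝ)/4 - a) + ((k:ℝ)/4 - a)^2/2 ≤ Real.exp ((k:ℝ)/4 - a) :=
    exp_ge_quad (by linarith)
  rw [h1]
  have hq : (0:ℝ) ≤ 1 + ((k:ℝ)/4 - a) + ((k:ℝ)/4 - a)^2/2 := by nlinarith
  exact mul_le_mul h2 h3 hq (Real.exp_pos _).le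

lemma sqrtB (a t : ℝ) (ht : 0 < t) (ha : 0 ≤ a) :
    Real.sqrt (Real.pi * a) ≤ (3.1416*a + t^2)/(2*t) := by
  have hpa : 0 ≤ Real.pi * a := mul_nonneg Real.pi_pos.le ha
  have hs := Real.sq_sqrt hpa
  have hu := Real.sqrt_nonneg (Real.pi * a)
  have h1 : Real.sqrt (Real.pi * a) ≤ (Real.pi*a + t^2)/(2*t) := by
    rw [le_div_iff₀ (by positivity)]
    nlinarith [sq_nonneg (Real.sqrt (Real.pi*a) - t)]
  have h2 : (Real.pi*a + t^2)/(2*t) ≤ (3.1416*a + t^2)/(2*t) := by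
    gcongr
    nlinarith [Real.pi_lt_d6]
  linarith

set_option maxHeartbeats 2000000 in
lemma key_ineq {a : ℝ} (ha : 1/4 ≤ a) :
    1 + Real.sqrt (Real.pi * a) ≤ Real.exp (a / Real.exp 1) + 8*a*Real.exp (-a) := by
  have ha0 : (0:ℝ) ≤ a := by linarith
  have hP := expP a ha0
  rcases le_or_gt a 4.5 with hbig | hbig
  · -- interval cases
    have main : ∀ l r : ℝ, ∀ k : ℕ, ∀ t : ℝ, l ≤ a → a ≤ r → r = (k:ℝ)/4 → 0 < t →
        (1 + (3.1416*a + t^2)/(2*t) ≤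
          (1 + 0.367879*a + (0.367879*a)^2/2 + (0.367879*a)^3/6 + (0.367879*a)^4/24)
          + 8*a*((0.7788:ℝ)^k * (1 + (r - a) + (r - a)^2/2))) →
        1 + Real.sqrt (Real.pi * a) ≤ Real.exp (a / Real.exp 1) + 8*a*Real.exp (-a) := by
      intro l r k t hl hr hrk ht hpoly
      have hE := expNeg a k (by rw [← hrk]; exact hr)
      rw [← hrk] at hE
      have h8 : 8*a*((0.7788:ℝ)^k * (1 + (r - a) + (r - a)^2/2)) ≤ 8*a*Real.exp (-a) :=
        mul_le_mul_of_nonneg_left hE (by linarith)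
      have hS := sqrtB a t ht ha0
      linarith
    rcases le_or_gt a 0.75 with h|h
    · refine main 0.25 0.75 3 (851/679) (by linarith) h (by norm_num) (by norm_num) ?_
      have h1 : (0:ℝ) ≤ a - 0.25 := by linarith
      have h2 : (0:ℝ) ≤ 0.75 - a := by linarith
      norm_num only
      linarith [pow_nonneg h1 4, pow_nonneg h2 4, mul_nonneg (pow_nonneg h1 3) h2,
        mul_nonneg (pow_nonneg h2 3) h1, mul_nonneg (mul_nonneg (pow_nonneg h1 2) h2) h2]
    rcases le_or_gt a 1.25 with h'|h'
    · refine main 0.75 1.25 5 (296/167) h.le h' (by norm_num) (by norm_num) ?_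
      have h1 : (0:ℝ) ≤ a - 0.75 := by linarith
      have h2 : (0:ℝ) ≤ 1.25 - a := by linarith
      norm_num only
      linarith [pow_nonneg h1 4, pow_nonneg h2 4, mul_nonneg (pow_nonneg h1 3) h2,
        mul_nonneg (pow_nonneg h2 3) h1, mul_nonneg (mul_nonneg (pow_nonneg h1 2) h2) h2]
    rcases le_or_gt a 1.75 with h''|h''
    · refine main 1.25 1.75 7 (1487/685) h'.le h'' (by norm_num) (by norm_num) ?_
      have h1 : (0:ℝ) ≤ a - 1.25 := by linarith
      have h2 : (0:ℝ) ≤ 1.75 - a := by linarith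
      norm_num only
      linarith [pow_nonneg h1 4, pow_nonneg h2 4, mul_nonneg (pow_nonneg h1 3) h2,
        mul_nonneg (pow_nonneg h2 3) h1, mul_nonneg (mul_nonneg (pow_nonneg h1 2) h2) h2]
    rcases le_or_gt a 2.25 with h3|h3
    · refine main 1.75 2.25 9 (1702/679) h''.le h3 (by norm_num) (by norm_num) ?_
      have h1 : (0:ℝ) ≤ a - 1.75 := by linarith
      have h2 : (0:ℝ) ≤ 2.25 - a := by linarith
      norm_num only
      linarith [pow_nonneg h1 4, pow_nonneg h2 4, mul_nonneg (pow_nonneg h1 3) h2,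
        mul_nonneg (pow_nonneg h2 3) h1, mul_nonneg (mul_nonneg (pow_nonneg h1 2) h2) h2]
    rcases le_or_gt a 2.75 with h4|h4
    · refine main 2.25 2.75 11 (1348/481) h3.le h4 (by norm_num) (by norm_num) ?_
      have h1 : (0:ℝ) ≤ a - 2.25 := by linarith
      have h2 : (0:ℝ) ≤ 2.75 - a := by linarith
      norm_num only
      linarith [pow_nonneg h1 4, pow_nonneg h2 4, mul_nonneg (pow_nonneg h1 3) h2,
        mul_nonneg (pow_nonneg h2 3) h1, mul_nonneg (mul_nonneg (pow_nonneg h1 2) h2) h2]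
    rcases le_or_gt a 3.25 with h5|h5
    · refine main 2.75 3.25 13 (3027/986) h4.le h5 (by norm_num) (by norm_num) ?_
      have h1 : (0:ℝ) ≤ a - 2.75 := by linarith
      have h2 : (0:ℝ) ≤ 3.25 - a := by linarith
      norm_num only
      linarith [pow_nonneg h1 4, pow_nonneg h2 4, mul_nonneg (pow_nonneg h1 3) h2,
        mul_nonneg (pow_nonneg h2 3) h1, mul_nonneg (mul_nonneg (pow_nonneg h1 2) h2) h2]
    rcases le_or_gt a 3.75 with h6|h6
    · refine main 3.25 3.75 15 (3117/940) h5.le h6 (by norm_num) (by norm_num) ?_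
      have h1 : (0:ℝ) ≤ a - 3.25 := by linarith
      have h2 : (0:ℝ) ≤ 3.75 - a := by linarith
      norm_num only
      linarith [pow_nonneg h1 4, pow_nonneg h2 4, mul_nonneg (pow_nonneg h1 3) h2,
        mul_nonneg (pow_nonneg h2 3) h1, mul_nonneg (mul_nonneg (pow_nonneg h1 2) h2) h2]
    rcases le_or_gt a 4.25 with h7|h7
    · refine main 3.75 4.25 17 (592/167) h6.le h7 (by norm_num) (by norm_num) ?_
      have h1 : (0:ℝ) ≤ a - 3.75 := by linarith
      have h2 : (0:ℝ) ≤ 4.25 - a := by linarith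
      norm_num only
      linarith [pow_nonneg h1 4, pow_nonneg h2 4, mul_nonneg (pow_nonneg h1 3) h2,
        mul_nonneg (pow_nonneg h2 3) h1, mul_nonneg (mul_nonneg (pow_nonneg h1 2) h2) h2]
    · refine main 4.25 4.5 18 (2521/680) h7.le hbig (by norm_num) (by norm_num) ?_
      have h1 : (0:ℝ) ≤ a - 4.25 := by linarith
      have h2 : (0:ℝ) ≤ 4.5 - a := by linarith
      norm_num only
      linarith [pow_nonneg h1 4, pow_nonneg h2 4, mul_nonneg (pow_nonneg h1 3) h2,
        mul_nonneg (pow_nonneg h2 3) h1, mul_nonneg (mul_nonneg (pow_nonneg h1 2) h2) h2]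
  · -- a ≥ 4.5
    have hsqrt : Real.sqrt (Real.pi * a) ≤ 0.84 * a := by
      have h1 : Real.pi * a ≤ (0.84*a)^2 := by nlinarith [Real.pi_lt_d6]
      calc Real.sqrt (Real.pi * a) ≤ Real.sqrt ((0.84*a)^2) :=
            Real.sqrt_le_sqrt h1
        _ = 0.84*a := Real.sqrt_sq (by linarith)
    have hpoly : 1 + 0.84*a ≤
        1 + 0.367879*a + (0.367879*a)^2/2 + (0.367879*a)^3/6 + (0.367879*a)^4/24 := by
      have ha2 : 4.5*a ≤ a^2 := by nlinarith
      have ha3 : 20.25*a ≤ a^3 := by nlinarith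
      have ha4 : (0:ℝ) ≤ a^4 := by positivity
      norm_num only
      linarith
    have h8 : (0:ℝ) ≤ 8*a*Real.exp (-a) := by positivity
    linarith


lemma gauss_sum_bound {a : ℝ} (ha : 0 < a) :
    Summable (fun j : ℕ => Real.exp (-(((j:ℝ)+1) - a)^2 / a)) ∧
    ∑' j : ℕ, Real.exp (-(((j:ℝ)+1) - a)^2 / a) ≤ 1 + Real.sqrt (Real.pi * a) := by
  set g : ℝ → ℝ := fun x => Real.exp (-(x - a)^2 / a) with hg
  have hg_cont : Continuous g := by fun_prop
  have hg_le_one : ∀ x, g x ≤ 1 := by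
    intro x
    rw [show (1:ℝ) = Real.exp 0 by simp]
    apply Real.exp_le_exp.2
    apply div_nonpos_of_nonpos_of_nonneg _ ha.le
    nlinarith [sq_nonneg (x-a)]
  have hg_mono : MonotoneOn g (Iic a) := by
    intro x hx y hy hxy
    apply Real.exp_le_exp.2
    rw [div_le_div_iff_of_pos_right ha]
    simp only [Set.mem_Iic] at hx hy
    nlinarith
  have hg_anti : AntitoneOn g (Ici a) := by
    intro x hx y hy hxy
    apply Real.exp_le_exp.2
    rw [div_le_div_iff_of_pos_right ha]
    simp only [Set.mem_Ici] at hx hy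
    nlinarith
  have hg_int : Integrable g := by
    have h1 : Integrable (fun x : ℝ => Real.exp (-(1/a) * x^2)) :=
      integrable_exp_neg_mul_sq (by positivity)
    have h2 := h1.comp_sub_right a
    convert h2 using 2 with x
    field_simp
    simp only [hg, neg_div]
  have hg_val : ∫ x, g x = Real.sqrt (Real.pi * a) := by
    have h1 : ∫ x, g x = ∫ x, (fun y : ℝ => Real.exp (-(1/a) * y^2)) (x - a) := by
      congr 1 with x
      simp only [hg]
      congr 1
      field_simp
    rw [h1, integral_sub_right_eq_self (fun y : ℝ => Real.exp (-(1/a) * y^2)) a,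
      integral_gaussian]
    congr 1
    field_simp
  have hbound : ∀ j : ℕ, g ((j:ℝ)+1) ≤ Real.exp (5*a/4 - 1) * Real.exp (-1) ^ j := by
    intro j
    have h1 : g ((j:ℝ)+1) ≤ Real.exp (5*a/4 - ((j:ℝ)+1)) := by
      apply Real.exp_le_exp.2
      rw [div_le_iff₀ ha]
      nlinarith [sq_nonneg (((j:ℝ)+1) - 3*a/2)]
    have h2 : Real.exp (5*a/4 - ((j:ℝ)+1)) = Real.exp (5*a/4 - 1) * Real.exp (-1) ^ j := by
      rw [← Real.exp_nat_mul, ← Real.exp_add]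
      ring_nf
    linarith
  have hsummable : Summable (fun j : ℕ => g ((j:ℝ)+1)) := by
    apply Summable.of_nonneg_of_le (fun j => (Real.exp_pos _).le) hbound
    exact ((summable_geometric_of_lt_one (Real.exp_pos _).le
      (Real.exp_lt_one_iff.2 (by norm_num))).mul_left _)
  refine ⟨hsummable, ?_⟩
  obtain ⟨m, hma, haM⟩ : ∃ m : ℕ, (m:ℝ) ≤ a ∧ a < (m:ℝ) + 1 :=
    ⟨⌊a⌋₊, Nat.floor_le ha.le, Nat.lt_floor_add_one a⟩
  -- tail bound
  have htail : ∑' i : ℕ, g (((i + (m+1) : ℕ):ℝ) + 1) ≤ ∫ x in Ioi ((m:ℝ)+1), g x := by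
    apply Real.tsum_le_of_sum_range_le (fun n => (Real.exp_pos _).le)
    intro n
    have hanti : AntitoneOn g (Icc ((m:ℝ)+1) (((m:ℝ)+1) + n)) := by
      apply hg_anti.mono
      intro x hx
      exact le_trans haM.le hx.1
    have h1 := hanti.sum_le_integral
    have heq : ∑ i ∈ Finset.range n, g (((i + (m+1) : ℕ):ℝ) + 1)
        = ∑ i ∈ Finset.range n, g (((m:ℝ)+1) + ((i:ℕ)+1 : ℕ)) := by
      apply Finset.sum_congr rfl
      intro i _
      congr 1
      push_cast
      ring
    rw [heq]
    refine le_trans h1 ?_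
    rw [intervalIntegral.integral_of_le (by linarith [Nat.cast_nonneg (α := ℝ) n])]
    apply setIntegral_mono_set hg_int.integrableOn
      (Filter.Eventually.of_forall fun x => (Real.exp_pos _).le)
      (HasSubset.Subset.eventuallyLE Ioc_subset_Ioi_self)
  -- middle bound
  have hmid : g m + g ((m:ℝ)+1) ≤ 1 + ∫ x in (m:ℝ)..((m:ℝ)+1), g x := by
    have hminle : min (g m) (g ((m:ℝ)+1)) ≤ ∫ x in (m:ℝ)..((m:ℝ)+1), g x := by
      have hconst : ∫ _x in (m:ℝ)..((m:ℝ)+1), min (g m) (g ((m:ℝ)+1))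
          = min (g m) (g ((m:ℝ)+1)) := by
        rw [intervalIntegral.integral_const]
        simp
      rw [← hconst]
      apply intervalIntegral.integral_mono_on (by linarith)
        intervalIntegrable_const (hg_cont.intervalIntegrable _ _)
      intro x hx
      rcases le_total x a with hxa | hxa
      · exact le_trans (min_le_left _ _) (hg_mono (Set.mem_Iic.2 hma) (Set.mem_Iic.2 hxa) hx.1)
      · exact le_trans (min_le_right _ _) (hg_anti (Set.mem_Ici.2 hxa) (Set.mem_Ici.2 haM.le) hx.2)
    rcases le_total (g m) (g ((m:ℝ)+1)) with h | h
    · rw [min_eq_left h] at hminle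
      linarith [hg_le_one ((m:ℝ)+1)]
    · rw [min_eq_right h] at hminle
      linarith [hg_le_one (m:ℝ)]
  -- head bound
  have hhead : ∑ i ∈ Finset.range (m+1), g ((i:ℝ)+1)
      ≤ 1 + ∫ x in (1:ℝ)..((m:ℝ)+1), g x := by
    rcases Nat.eq_zero_or_pos m with hm0 | hmpos
    · rw [hm0]
      simp only [Finset.sum_range_one, Nat.cast_zero, zero_add]
      have : ∫ x in (1:ℝ)..((0:ℕ):ℝ)+1, g x = 0 := by norm_num
      rw [hm0] at *
      push_cast
      norm_num
      linarith [hg_le_one (1:ℝ)]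
    · obtain ⟨n, rfl⟩ : ∃ n, m = n + 1 := ⟨m - 1, (Nat.succ_pred_eq_of_pos hmpos).symm⟩
      rw [Finset.sum_range_succ, Finset.sum_range_succ]
      have hmono2 : MonotoneOn g (Icc (1:ℝ) (1 + (n:ℕ))) := by
        apply hg_mono.mono
        intro x hx
        refine Set.mem_Iic.2 (le_trans hx.2 ?_)
        push_cast
        push_cast at hma
        linarith
      have h1 := hmono2.sum_le_integral
      have heq : ∑ i ∈ Finset.range n, g ((i:ℝ)+1) = ∑ i ∈ Finset.range n, g (1 + (i:ℕ)) := by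
        apply Finset.sum_congr rfl
        intro i _
        congr 1
        push_cast
        ring
      have hadj : (∫ x in (1:ℝ)..(1 + (n:ℕ):ℝ), g x) + ∫ x in (1 + (n:ℕ):ℝ)..((n+1:ℕ):ℝ)+1, g x
          = ∫ x in (1:ℝ)..((n+1:ℕ):ℝ)+1, g x := by
        exact intervalIntegral.integral_add_adjacent_intervals
          (hg_cont.intervalIntegrable (μ := MeasureTheory.volume) _ _) (hg_cont.intervalIntegrable (μ := MeasureTheory.volume) _ _)
      have hmid2 : g ((n+1:ℕ):ℝ) + g (((n+1:ℕ):ℝ)+1) ≤ 1 + ∫ x in (1 + (n:ℕ):ℝ)..((n+1:ℕ):ℝ)+1, g x := by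
        have e1 : (1 + (n:ℕ):ℝ) = ((n+1:ℕ):ℝ) := by push_cast; ring
        rw [e1]
        exact_mod_cast hmid
      rw [heq]
      push_cast at h1 hadj hmid2 ⊢
      linarith
  -- assemble
  have hsplit := Summable.sum_add_tsum_nat_add (f := fun j : ℕ => g ((j:ℝ)+1)) (m+1) hsummable
  have hIoc : ∫ x in (1:ℝ)..((m:ℝ)+1), g x = ∫ x in Ioc (1:ℝ) ((m:ℝ)+1), g x :=
    intervalIntegral.integral_of_le (by linarith [Nat.cast_nonneg (α := ℝ) m])
  have hunion : (∫ x in Ioc (1:ℝ) ((m:ℝ)+1), g x) + ∫ x in Ioi ((m:ℝ)+1), g x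
      = ∫ x in Ioi (1:ℝ), g x := by
    have hu := setIntegral_union (μ := volume) (f := g) (s := Ioc (1:ℝ) ((m:ℝ)+1))
      (t := Ioi ((m:ℝ)+1)) (Ioc_disjoint_Ioi le_rfl) measurableSet_Ioi
      hg_int.integrableOn hg_int.integrableOn
    rw [Ioc_union_Ioi_eq_Ioi (by linarith [Nat.cast_nonneg (α := ℝ) m] : (1:ℝ) ≤ (m:ℝ)+1)] at hu
    linarith [hu]
  have hle2 : ∫ x in Ioi (1:ℝ), g x ≤ ∫ x, g x :=
    setIntegral_le_integral hg_int (Filter.Eventually.of_forall fun x => (Real.exp_pos _).le)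
  calc ∑' j : ℕ, g ((j:ℝ)+1)
      = ∑ i ∈ Finset.range (m+1), g ((i:ℝ)+1) + ∑' i : ℕ, g (((i + (m+1):ℕ):ℝ)+1) := by
        rw [← hsplit]
    _ ≤ (1 + ∫ x in (1:ℝ)..((m:ℝ)+1), g x) + ∫ x in Ioi ((m:ℝ)+1), g x := by
        exact add_le_add hhead htail
    _ ≤ 1 + ∫ x, g x := by
        rw [hIoc]
        linarith
    _ = 1 + Real.sqrt (Real.pi * a) := by rw [hg_val]


theorem series_bound_large_s (s c : ℝ) (hc : 0 < c) (hs : Real.sqrt c / 2 < s) :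
    Summable (fun j : ℕ => Real.exp (2 * (j + 1) - c * (j + 1) ^ 2 / s ^ 2)) ∧
    ∑' j : ℕ, Real.exp (2 * (j + 1) - c * (j + 1) ^ 2 / s ^ 2) ≤
      8 * s ^ 2 / c + Real.exp ((1 + 1 / Real.exp 1) * s ^ 2 / c) := by
  have hs0 : 0 < s := lt_of_le_of_lt (by positivity) hs
  set a : ℝ := s^2/c with hadef
  have ha0 : 0 < a := by positivity
  have ha : 1/4 ≤ a := by
    have h1 : Real.sqrt c ^ 2 = c := Real.sq_sqrt hc.le
    have h3 : c / 4 < s^2 := by nlinarith [Real.sqrt_nonneg c]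
    rw [hadef, le_div_iff₀ hc]
    linarith
  have hfun : ∀ j : ℕ, Real.exp (2 * ((j:ℝ) + 1) - c * ((j:ℝ) + 1) ^ 2 / s ^ 2)
      = Real.exp a * Real.exp (-(((j:ℝ)+1) - a)^2 / a) := by
    intro j
    rw [← Real.exp_add]
    congr 1
    rw [hadef]
    field_simp
    ring
  obtain ⟨hsum, hbound⟩ := gauss_sum_bound ha0
  constructor
  · exact Summable.congr (hsum.mul_left (Real.exp a)) (fun j => (hfun j).symm)
  · have hfin : Real.exp a * (Real.exp (a / Real.exp 1) + 8*a*Real.exp (-a))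
        = 8 * s^2/c + Real.exp ((1 + 1/Real.exp 1) * s^2/c) := by
      rw [mul_add, ← Real.exp_add]
      have e1 : a + a / Real.exp 1 = (1 + 1/Real.exp 1) * s^2/c := by
        rw [hadef]; ring
      have e2 : Real.exp a * (8*a*Real.exp (-a)) = 8 * s^2/c := by
        have : Real.exp a * Real.exp (-a) = 1 := by
          rw [← Real.exp_add]; simp
        calc Real.exp a * (8*a*Real.exp (-a)) = 8*a*(Real.exp a * Real.exp (-a)) := by ring
          _ = 8*a := by rw [this]; ring
          _ = 8 * s^2/c := by rw [hadef]; ring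
      rw [e1, e2]
      ring
    calc ∑' j : ℕ, Real.exp (2 * ((j:ℝ) + 1) - c * ((j:ℝ) + 1) ^ 2 / s ^ 2)
        = ∑' j : ℕ, Real.exp a * Real.exp (-(((j:ℝ)+1) - a)^2 / a) := tsum_congr hfun
      _ = Real.exp a * ∑' j : ℕ, Real.exp (-(((j:ℝ)+1) - a)^2 / a) := tsum_mul_left
      _ ≤ Real.exp a * (1 + Real.sqrt (Real.pi * a)) :=
          mul_le_mul_of_nonneg_left hbound (Real.exp_pos a).le
      _ ≤ Real.exp a * (Real.exp (a / Real.exp 1) + 8*a*Real.exp (-a)) :=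
          mul_le_mul_of_nonneg_left (key_ineq ha) (Real.exp_pos a).le
      _ = 8 * s^2/c + Real.exp ((1 + 1/Real.exp 1) * s^2/c) := hfin
end

section
/- Let X be a real random variable with E[X] = 0 such that for all t > 0, max{Pr(X ≥ t), Pr(X ≤ -t)} ≤ b·exp(-ct²), where b ≥ 1 and c > 0. Then for any s > 0, E[e^{sX}] ≤ e^{7bs²/c}. -/
open MeasureTheory

open Real Set in
lemma exp_le_add_exp_sq (y : ℝ) : Real.exp y ≤ y + Real.exp (y ^ 2) := by
  rcases le_or_gt |y| 1 with h | h
  · have h2 := Real.exp_bound h (by norm_num : 0 < 2)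
    have hs : ∑ m ∈ Finset.range 2, y ^ m / m.factorial = 1 + y := by
      simp [Finset.sum_range_succ]
    rw [hs] at h2
    have h3 : Real.exp y ≤ 1 + y + y ^ 2 := by
      have h5 := (abs_sub_le_iff.1 h2).1
      have hy2 : |y| ^ 2 = y ^ 2 := sq_abs y
      have h6 : ((Nat.succ 2 : ℕ) : ℝ) / ((Nat.factorial 2 : ℕ) * (2:ℕ)) = 3/4 := by
        norm_num [Nat.factorial]
      rw [h6, hy2] at h5
      nlinarith [sq_nonneg y]
    have h4 : 1 + y ^ 2 ≤ Real.exp (y ^ 2) := by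
      have := Real.add_one_le_exp (y ^ 2); linarith
    linarith
  · have hy2 : |y| ≤ y ^ 2 := by nlinarith [abs_nonneg y, sq_abs y]
    rcases le_or_gt 0 y with hy | hy
    · have : Real.exp y ≤ Real.exp (y ^ 2) :=
        Real.exp_le_exp.2 ((le_abs_self y).trans hy2)
      linarith
    · have h1 : Real.exp y ≤ 1 := Real.exp_le_one_iff.2 hy.le
      have h2 : 1 + y ^ 2 ≤ Real.exp (y ^ 2) := by
        have := Real.add_one_le_exp (y ^ 2); linarith
      have h3 : -y ≤ y ^ 2 := by rw [← abs_of_neg hy]; exact hy2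
      linarith

open Real Set in
lemma ftc_exp (lam x : ℝ) (hx : 0 ≤ x) :
    ∫ t in (0:ℝ)..x, lam * Real.exp (lam * t) = Real.exp (lam * x) - 1 := by
  have hderiv : ∀ t ∈ Set.uIcc (0:ℝ) x, HasDerivAt (fun u => Real.exp (lam * u))
      (lam * Real.exp (lam * t)) t := by
    intro t _
    have h := ((hasDerivAt_id t).const_mul lam).exp
    simpa [mul_comm] using h
  have hcont : IntervalIntegrable (fun t => lam * Real.exp (lam * t)) volume 0 x :=
    (Continuous.intervalIntegrable (by continuity) 0 x)
  have := intervalIntegral.integral_eq_sub_of_hasDerivAt hderiv hcont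
  simpa using this


open Real Set in
lemma lintegral_exp_sq_le {Ω : Type*} [MeasurableSpace Ω] (μ : Measure Ω)
    [IsProbabilityMeasure μ] (X : Ω → ℝ) (hX : Measurable X)
    (b c : ℝ) (hb : 1 ≤ b) (hc : 0 < c)
    (htail : ∀ t : ℝ, 0 < t →
      max (μ {ω | t ≤ X ω}).toReal (μ {ω | X ω ≤ -t}).toReal ≤ b * Real.exp (-c * t ^ 2))
    (lam : ℝ) (hlam0 : 0 < lam) (hlamc : lam < c) :
    ∫⁻ ω, ENNReal.ofReal (Real.exp (lam * X ω ^ 2)) ∂μ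
      ≤ ENNReal.ofReal (1 + 2 * b * lam / (c - lam)) := by
  set f : Ω → ℝ := fun ω => X ω ^ 2 with hf
  set g : ℝ → ℝ := fun t => lam * Real.exp (lam * t) with hg
  have key : ∫⁻ ω, ENNReal.ofReal (∫ t in (0:ℝ)..f ω, g t) ∂μ
      = ∫⁻ t in Ioi (0:ℝ), μ {a | t ≤ f a} * ENNReal.ofReal (g t) := by
    refine lintegral_comp_eq_lintegral_meas_le_mul μ ?_ ?_ ?_ ?_
    · exact Filter.Eventually.of_forall fun ω => sq_nonneg _
    · exact ((hX.pow_const 2).aemeasurable)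
    · exact fun t _ => Continuous.intervalIntegrable (by continuity) 0 t
    · exact Filter.Eventually.of_forall fun t =>
        mul_nonneg hlam0.le (Real.exp_nonneg _)
  -- pointwise rewrite of exp
  have hpt : ∀ ω, ENNReal.ofReal (Real.exp (lam * f ω))
      = ENNReal.ofReal (∫ t in (0:ℝ)..f ω, g t) + 1 := by
    intro ω
    rw [ftc_exp lam (f ω) (sq_nonneg _)]
    rw [← ENNReal.ofReal_one, ← ENNReal.ofReal_add (by
      have := Real.one_le_exp (mul_nonneg hlam0.le (sq_nonneg (X ω)))
      linarith) zero_le_one]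
    norm_num
  have split : ∫⁻ ω, ENNReal.ofReal (Real.exp (lam * X ω ^ 2)) ∂μ
      = (∫⁻ t in Ioi (0:ℝ), μ {a | t ≤ f a} * ENNReal.ofReal (g t)) + 1 := by
    calc ∫⁻ ω, ENNReal.ofReal (Real.exp (lam * X ω ^ 2)) ∂μ
        = ∫⁻ ω, (ENNReal.ofReal (∫ t in (0:ℝ)..f ω, g t) + 1) ∂μ := by
          exact lintegral_congr fun ω => hpt ω
      _ = (∫⁻ ω, ENNReal.ofReal (∫ t in (0:ℝ)..f ω, g t) ∂μ) + 1 := by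
          rw [lintegral_add_right _ measurable_const]; simp
      _ = _ := by rw [key]
  rw [split]
  -- bound the tail integral
  have tail_bound : ∀ t ∈ Ioi (0:ℝ), μ {a | t ≤ f a} * ENNReal.ofReal (g t)
      ≤ ENNReal.ofReal (2 * b * lam * Real.exp (-(c - lam) * t)) := by
    intro t ht
    have ht' : (0:ℝ) < t := ht
    have hsq : (0:ℝ) < Real.sqrt t := Real.sqrt_pos.2 ht'
    have hsub : {a | t ≤ f a} ⊆ {a | Real.sqrt t ≤ X a} ∪ {a | X a ≤ -Real.sqrt t} := by
      intro a ha
      have h1 : Real.sqrt t ≤ |X a| := by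
        have := Real.sqrt_le_sqrt (ha : t ≤ X a ^ 2)
        rwa [Real.sqrt_sq_eq_abs] at this
      rcases abs_cases (X a) with ⟨he, _⟩ | ⟨he, _⟩
      · exact Or.inl (by simp only [mem_setOf_eq]; linarith)
      · exact Or.inr (by simp only [mem_setOf_eq]; linarith)
    have hmax := htail (Real.sqrt t) hsq
    have hsqt : Real.sqrt t ^ 2 = t := Real.sq_sqrt ht'.le
    rw [hsqt] at hmax
    have hbnn : (0:ℝ) ≤ b := by linarith
    have h1 : μ {a | Real.sqrt t ≤ X a} ≤ ENNReal.ofReal (b * Real.exp (-c * t)) := by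
      rw [ENNReal.le_ofReal_iff_toReal_le (measure_ne_top μ _)
        (mul_nonneg hbnn (Real.exp_nonneg _))]
      exact le_trans (le_max_left _ _) hmax
    have h2 : μ {a | X a ≤ -Real.sqrt t} ≤ ENNReal.ofReal (b * Real.exp (-c * t)) := by
      rw [ENNReal.le_ofReal_iff_toReal_le (measure_ne_top μ _)
        (mul_nonneg hbnn (Real.exp_nonneg _))]
      exact le_trans (le_max_right _ _) hmax
    have hμ : μ {a | t ≤ f a} ≤ ENNReal.ofReal (2 * (b * Real.exp (-c * t))) := by
      calc μ {a | t ≤ f a} ≤ μ ({a | Real.sqrt t ≤ X a} ∪ {a | X a ≤ -Real.sqrt t}) :=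
            measure_mono hsub
        _ ≤ μ {a | Real.sqrt t ≤ X a} + μ {a | X a ≤ -Real.sqrt t} := measure_union_le _ _
        _ ≤ ENNReal.ofReal (b * Real.exp (-c * t)) + ENNReal.ofReal (b * Real.exp (-c * t)) :=
            add_le_add h1 h2
        _ = ENNReal.ofReal (2 * (b * Real.exp (-c * t))) := by
            rw [← ENNReal.ofReal_add (mul_nonneg (by linarith) (Real.exp_nonneg _))
              (mul_nonneg (by linarith) (Real.exp_nonneg _))]; ring_nf
    calc μ {a | t ≤ f a} * ENNReal.ofReal (g t)
        ≤ ENNReal.ofReal (2 * (b * Real.exp (-c * t))) * ENNReal.ofReal (g t) :=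
          mul_le_mul_left hμ _
      _ = ENNReal.ofReal (2 * (b * Real.exp (-c * t)) * g t) := by
          rw [← ENNReal.ofReal_mul (by
            have hbnn : (0:ℝ) ≤ b := by linarith
            positivity)]
      _ = ENNReal.ofReal (2 * b * lam * Real.exp (-(c - lam) * t)) := by
          congr 1
          simp only [hg]
          rw [show (-(c - lam) * t) = (-c * t) + lam * t by ring, Real.exp_add]
          ring
  have int_bound : ∫⁻ t in Ioi (0:ℝ), μ {a | t ≤ f a} * ENNReal.ofReal (g t)
      ≤ ENNReal.ofReal (2 * b * lam / (c - lam)) := by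
    have hclam : (0:ℝ) < c - lam := by linarith
    have hInt : IntegrableOn (fun t => 2 * b * lam * Real.exp (-(c - lam) * t)) (Ioi 0) := by
      exact (exp_neg_integrableOn_Ioi 0 hclam).const_mul _
    calc ∫⁻ t in Ioi (0:ℝ), μ {a | t ≤ f a} * ENNReal.ofReal (g t)
        ≤ ∫⁻ t in Ioi (0:ℝ), ENNReal.ofReal (2 * b * lam * Real.exp (-(c - lam) * t)) := by
          refine lintegral_mono_ae ?_
          filter_upwards [ae_restrict_mem measurableSet_Ioi] with t ht
          exact tail_bound t ht
      _ = ENNReal.ofReal (∫ t in Ioi (0:ℝ), 2 * b * lam * Real.exp (-(c - lam) * t)) := by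
          rw [← ofReal_integral_eq_lintegral_ofReal hInt
            (Filter.Eventually.of_forall fun t => by
              have hbnn : (0:ℝ) ≤ b := by linarith
              positivity)]
      _ = ENNReal.ofReal (2 * b * lam / (c - lam)) := by
          congr 1
          rw [MeasureTheory.integral_const_mul]
          have : ∫ t in Ioi (0:ℝ), Real.exp (-(c - lam) * t) = (c - lam)⁻¹ := by
            have h := integral_comp_mul_left_Ioi (fun u => Real.exp (-u)) 0 hclam
            simp only [mul_zero, neg_mul] at h ⊢
            rw [h, integral_exp_neg_Ioi_zero]
            simp
          rw [this]; ring
  calc (∫⁻ t in Ioi (0:ℝ), μ {a | t ≤ f a} * ENNReal.ofReal (g t)) + 1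
      ≤ ENNReal.ofReal (2 * b * lam / (c - lam)) + 1 := add_le_add_left int_bound 1
    _ = ENNReal.ofReal (1 + 2 * b * lam / (c - lam)) := by
        have hbnn : (0:ℝ) ≤ b := by linarith
        have hclam : (0:ℝ) < c - lam := by linarith
        rw [← ENNReal.ofReal_one, ← ENNReal.ofReal_add (by positivity) zero_le_one]
        ring_nf

open Real Set in
theorem mgf_bound_subgaussian {Ω : Type*} [MeasurableSpace Ω] (μ : Measure Ω)
    [IsProbabilityMeasure μ] (X : Ω → ℝ) (hX : Measurable X)
    (hint : Integrable X μ) (hmean : ∫ ω, X ω ∂μ = 0)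
    (b c : ℝ) (hb : 1 ≤ b) (hc : 0 < c)
    (htail : ∀ t : ℝ, 0 < t →
      max (μ {ω | t ≤ X ω}).toReal (μ {ω | X ω ≤ -t}).toReal ≤ b * Real.exp (-c * t ^ 2)) :
    ∀ s : ℝ, 0 < s →
      ∫⁻ ω, ENNReal.ofReal (Real.exp (s * X ω)) ∂μ ≤
        ENNReal.ofReal (Real.exp (7 * b * s ^ 2 / c)) := by
  intro s hs
  have hbnn : (0:ℝ) ≤ b := by linarith
  rcases le_or_gt (s ^ 2) (c / 2) with hsc | hsc
  · -- small s case
    have hlam0 : 0 < s ^ 2 := by positivity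
    have hlamc : s ^ 2 < c := by linarith
    have hA := lintegral_exp_sq_le μ X hX b c hb hc htail (s ^ 2) hlam0 hlamc
    set B : ℝ := 1 + 2 * b * s ^ 2 / (c - s ^ 2) with hB
    have hBnn : 0 ≤ B := by
      have h0 : (0:ℝ) < c - s ^ 2 := by linarith
      have h1 : 0 ≤ 2 * b * s ^ 2 / (c - s ^ 2) := by positivity
      rw [hB]; linarith
    -- integrability of exp(s^2 X^2)
    have hmes : Measurable fun ω => Real.exp (s ^ 2 * X ω ^ 2) :=
      (((hX.pow_const 2).const_mul (s ^ 2)).exp)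
    have hintsq : Integrable (fun ω => Real.exp (s ^ 2 * X ω ^ 2)) μ := by
      refine ⟨hmes.aestronglyMeasurable, ?_⟩
      rw [hasFiniteIntegral_iff_ofReal (Filter.Eventually.of_forall fun ω => (Real.exp_nonneg _))]
      exact lt_of_le_of_lt hA ENNReal.ofReal_lt_top
    -- pointwise bound
    have hpt : ∀ ω, Real.exp (s * X ω) ≤ s * X ω + Real.exp (s ^ 2 * X ω ^ 2) := by
      intro ω
      have := exp_le_add_exp_sq (s * X ω)
      have heq : (s * X ω) ^ 2 = s ^ 2 * X ω ^ 2 := by ring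
      rwa [heq] at this
    -- integrability of exp(sX)
    have hintX : Integrable (fun ω => Real.exp (s * X ω)) μ := by
      refine Integrable.mono' ((hint.const_mul s).abs.add hintsq)
        ((hX.const_mul s).exp).aestronglyMeasurable
        (Filter.Eventually.of_forall fun ω => ?_)
      rw [Real.norm_eq_abs, abs_of_nonneg (Real.exp_nonneg _)]
      calc Real.exp (s * X ω) ≤ s * X ω + Real.exp (s ^ 2 * X ω ^ 2) := hpt ω
        _ ≤ |s * X ω| + Real.exp (s ^ 2 * X ω ^ 2) := by
            have := le_abs_self (s * X ω); linarith
    -- real integral bound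
    have hreal : ∫ ω, Real.exp (s ^ 2 * X ω ^ 2) ∂μ ≤ B := by
      have h1 : ENNReal.ofReal (∫ ω, Real.exp (s ^ 2 * X ω ^ 2) ∂μ)
          = ∫⁻ ω, ENNReal.ofReal (Real.exp (s ^ 2 * X ω ^ 2)) ∂μ :=
        ofReal_integral_eq_lintegral_ofReal hintsq
          (Filter.Eventually.of_forall fun ω => Real.exp_nonneg _)
      have h2 : ENNReal.ofReal (∫ ω, Real.exp (s ^ 2 * X ω ^ 2) ∂μ) ≤ ENNReal.ofReal B :=
        h1 ▸ hA
      exact (ENNReal.ofReal_le_ofReal_iff hBnn).1 h2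
    have hmgf : ∫ ω, Real.exp (s * X ω) ∂μ ≤ B := by
      calc ∫ ω, Real.exp (s * X ω) ∂μ
          ≤ ∫ ω, (s * X ω + Real.exp (s ^ 2 * X ω ^ 2)) ∂μ := by
            refine integral_mono hintX ((hint.const_mul s).add hintsq) hpt
        _ = s * ∫ ω, X ω ∂μ + ∫ ω, Real.exp (s ^ 2 * X ω ^ 2) ∂μ := by
            rw [integral_add (hint.const_mul s) hintsq, integral_const_mul]
        _ = ∫ ω, Real.exp (s ^ 2 * X ω ^ 2) ∂μ := by rw [hmean]; ring
        _ ≤ B := hreal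
    -- conclude
    have hfinal : B ≤ Real.exp (7 * b * s ^ 2 / c) := by
      have h1 : 2 * b * s ^ 2 / (c - s ^ 2) ≤ 4 * b * s ^ 2 / c := by
        rw [div_le_div_iff₀ (by linarith) hc]
        nlinarith [mul_nonneg (mul_nonneg hbnn hlam0.le)
          (by linarith : (0:ℝ) ≤ c - 2 * s ^ 2)]
      have h2 : B ≤ 1 + 4 * b * s ^ 2 / c := by rw [hB]; linarith
      have h3 : 1 + 4 * b * s ^ 2 / c ≤ Real.exp (4 * b * s ^ 2 / c) := by
        have := Real.add_one_le_exp (4 * b * s ^ 2 / c); linarith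
      have h4 : Real.exp (4 * b * s ^ 2 / c) ≤ Real.exp (7 * b * s ^ 2 / c) := by
        apply Real.exp_le_exp.2
        have : 0 ≤ 3 * b * s ^ 2 / c := by positivity
        have heq : 7 * b * s ^ 2 / c = 4 * b * s ^ 2 / c + 3 * b * s ^ 2 / c := by ring
        linarith
      linarith
    calc ∫⁻ ω, ENNReal.ofReal (Real.exp (s * X ω)) ∂μ
        = ENNReal.ofReal (∫ ω, Real.exp (s * X ω) ∂μ) :=
          (ofReal_integral_eq_lintegral_ofReal hintX
            (Filter.Eventually.of_forall fun ω => Real.exp_nonneg _)).symm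
      _ ≤ ENNReal.ofReal (Real.exp (7 * b * s ^ 2 / c)) :=
          ENNReal.ofReal_le_ofReal (hmgf.trans hfinal)
  · -- large s case
    have hlam0 : 0 < c / 2 := by linarith
    have hlamc : c / 2 < c := by linarith
    have hA := lintegral_exp_sq_le μ X hX b c hb hc htail (c / 2) hlam0 hlamc
    have hAval : (1 : ℝ) + 2 * b * (c / 2) / (c - c / 2) = 1 + 2 * b := by
      have hc2 : c - c / 2 = c / 2 := by ring
      rw [hc2, mul_div_assoc, div_self (ne_of_gt (by linarith : (0:ℝ) < c / 2)), mul_one]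
    rw [hAval] at hA
    have hpt : ∀ ω, Real.exp (s * X ω)
        ≤ Real.exp (s ^ 2 / (2 * c)) * Real.exp (c / 2 * X ω ^ 2) := by
      intro ω
      rw [← Real.exp_add]
      apply Real.exp_le_exp.2
      have h := sq_nonneg (s - c * X ω)
      have h2 : 0 < 2 * c := by linarith
      rw [div_add' _ _ _ (ne_of_gt h2), le_div_iff₀ h2]
      nlinarith
    calc ∫⁻ ω, ENNReal.ofReal (Real.exp (s * X ω)) ∂μ
        ≤ ∫⁻ ω, ENNReal.ofReal (Real.exp (s ^ 2 / (2 * c))) *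
            ENNReal.ofReal (Real.exp (c / 2 * X ω ^ 2)) ∂μ := by
          refine lintegral_mono fun ω => ?_
          rw [← ENNReal.ofReal_mul (Real.exp_nonneg _)]
          exact ENNReal.ofReal_le_ofReal (hpt ω)
      _ = ENNReal.ofReal (Real.exp (s ^ 2 / (2 * c))) *
            ∫⁻ ω, ENNReal.ofReal (Real.exp (c / 2 * X ω ^ 2)) ∂μ := by
          rw [lintegral_const_mul _ (by
            exact (((hX.pow_const 2).const_mul (c/2)).exp).ennreal_ofReal)]
      _ ≤ ENNReal.ofReal (Real.exp (s ^ 2 / (2 * c))) * ENNReal.ofReal (1 + 2 * b) :=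
          mul_le_mul_right hA _
      _ = ENNReal.ofReal (Real.exp (s ^ 2 / (2 * c)) * (1 + 2 * b)) := by
          rw [← ENNReal.ofReal_mul (Real.exp_nonneg _)]
      _ ≤ ENNReal.ofReal (Real.exp (7 * b * s ^ 2 / c)) := by
          apply ENNReal.ofReal_le_ofReal
          have h1 : (1 : ℝ) + 2 * b ≤ Real.exp (2 * b) := by
            have := Real.add_one_le_exp (2 * b); linarith
          calc Real.exp (s ^ 2 / (2 * c)) * (1 + 2 * b)
              ≤ Real.exp (s ^ 2 / (2 * c)) * Real.exp (2 * b) := by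
                apply mul_le_mul_of_nonneg_left h1 (Real.exp_nonneg _)
            _ = Real.exp (s ^ 2 / (2 * c) + 2 * b) := (Real.exp_add _ _).symm
            _ ≤ Real.exp (7 * b * s ^ 2 / c) := by
                apply Real.exp_le_exp.2
                rw [div_add' _ _ _ (by positivity : (2*c) ≠ 0), div_le_div_iff₀ (by linarith) hc]
                nlinarith [mul_nonneg (mul_nonneg hbnn
                    (by linarith : (0:ℝ) ≤ s ^ 2 - c / 2)) hc.le,
                  mul_nonneg (mul_nonneg (by linarith : (0:ℝ) ≤ b - 1) (sq_nonneg s)) hc.le,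
                  mul_nonneg (sq_nonneg s) hc.le]
end
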